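/- For every natural number m, the set of values r(S) over all LR-strings S of length at most m equals the set of fractions ℓ/2^m for 1 ≤ ℓ ≤ 2^(m+1) − 1. -/

import Mathlib

open List

/-- `r`-value of an LR-string (`true` = R, `false` = L):
`r(ε) = 1`, `r(SL) = r(S) - 2^(-|SL|)`, `r(SR) = r(S) + 2^(-|SR|)`. -/
def rval (S : List Bool) : ℚ :=
  1 + ∑ i ∈ Finset.range S.length,
      (if S.getD i false then ((2:ℚ)^(i+1))⁻¹ else -((2:ℚ)^(i+1))⁻¹)

/-- Generalized strings: LR-strings plus the formal symbols `R⁻¹ = inv true`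
and `L⁻¹ = inv false`. -/
inductive Gen where
  | inv : Bool → Gen
  | str : List Bool → Gen
deriving DecidableEq

/-- Left parent: `P_L(ε) = R⁻¹`, `P_L(SL) = P_L(S)`, `P_L(SR) = S`. -/
def PL (S : List Bool) : Gen :=
  match S.reverse.dropWhile (· = false) with
  | [] => Gen.inv true
  | _ :: t => Gen.str t.reverse

/-- Right parent: `P_R(ε) = L⁻¹`, `P_R(SL) = S`, `P_R(SR) = P_R(S)`. -/
def PR (S : List Bool) : Gen :=
  match S.reverse.dropWhile (· = true) with
  | [] => Gen.inv false
  | _ :: t => Gen.str t.reverse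

/-- Extension of `r` to generalized strings: `r(R⁻¹) = 0`, `r(L⁻¹) = 2`. -/
def rg : Gen → ℚ
  | Gen.inv true => 0
  | Gen.inv false => 2
  | Gen.str S => rval S

/-- Length of a generalized string; the formal symbols have length `-1`. -/
def glen : Gen → ℤ
  | Gen.inv _ => -1
  | Gen.str S => S.length

/-- Position function: `N(ε) = 0`, `N(SL) = 2N(S)+1`, `N(SR) = 2N(S)+2`. -/
def posN (S : List Bool) : ℕ :=
  ∑ i ∈ Finset.range S.length, (if S.getD i false then 2 else 1) * 2^(S.length - 1 - i)

/-- The alternating-block string `S(k₀,…,k_m) = R^{k₀} L^{k₁} R^{k₂} ⋯`. -/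
def blockStr (ks : List ℕ) : List Bool :=
  (ks.zipIdx.map (fun p => List.replicate p.1 (decide (p.2 % 2 = 0)))).flatten

/-- Continued fraction `[q₀,…,q_m]`. -/
def cf : List ℚ → ℚ
  | [] => 0
  | [q] => q
  | q :: qs => q + (cf qs)⁻¹

/-- Admissible continued-fraction index sequences: `[q₀]` with `q₀ ≥ 1`, or
`[q₀,…,q_m]` with `m ≥ 1`, intermediate `qᵢ ≥ 1`, and `q_m ≥ 2`. -/
def CFAdmissible (qs : List ℕ) : Prop :=
  qs ≠ [] ∧ (qs.length = 1 → 1 ≤ qs.getD 0 0) ∧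
    (∀ i, 1 ≤ i → i + 1 < qs.length → 1 ≤ qs.getD i 0) ∧
    (2 ≤ qs.length → 2 ≤ qs.getLastD 0)

/-- The map `f([q₀,…,q_m]) = S(q₀,…,q_{m-1},q_m - 1)`. -/
def cfToStr (qs : List ℕ) : List Bool :=
  blockStr (qs.dropLast ++ [qs.getLastD 0 - 1])

lemma rval_append (S : List Bool) (b : Bool) :
    rval (S ++ [b]) = rval S +
      (if b then ((2:ℚ)^(S.length+1))⁻¹ else -((2:ℚ)^(S.length+1))⁻¹) := by
  unfold rval
  have hlen : (S ++ [b]).length = S.length + 1 := by simp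
  rw [hlen, Finset.sum_range_succ]
  have h1 : (S ++ [b]).getD S.length false = b := by
    rw [List.getD_append_right _ _ _ _ le_rfl]; simp
  have h2 : ∀ i ∈ Finset.range S.length,
      (if (S ++ [b]).getD i false then ((2:ℚ)^(i+1))⁻¹ else -((2:ℚ)^(i+1))⁻¹)
        = (if S.getD i false then ((2:ℚ)^(i+1))⁻¹ else -((2:ℚ)^(i+1))⁻¹) := by
    intro i hi
    rw [List.getD_append _ _ _ _ (Finset.mem_range.mp hi)]
  rw [Finset.sum_congr rfl h2, h1]
  ring

lemma exists_str : ∀ n B : ℕ, B < 2^n →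
    ∃ S : List Bool, S.length = n ∧ rval S = (2*B+1)/2^n := by
  intro n
  induction n with
  | zero =>
    intro B hB
    interval_cases B
    exact ⟨[], rfl, by simp [rval]⟩
  | succ n ih =>
    intro B hB
    obtain ⟨S, hlen, hr⟩ := ih (B / 2) (by omega)
    refine ⟨S ++ [decide (B % 2 = 1)], by simp [hlen], ?_⟩
    rw [rval_append, hr, hlen]
    rcases Nat.even_or_odd B with h | h
    · have h2 : B % 2 = 0 := Nat.even_iff.mp h
      have hb : B = 2 * (B / 2) := by omega
      have : (B : ℚ) = 2 * (B / 2 : ℕ) := by exact_mod_cast congrArg (Nat.cast : ℕ → ℚ) hb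
      simp only [h2]
      norm_num
      rw [this]
      field_simp
      ring
    · have h2 : B % 2 = 1 := Nat.odd_iff.mp h
      have hb : B = 2 * (B / 2) + 1 := by omega
      have : (B : ℚ) = 2 * (B / 2 : ℕ) + 1 := by exact_mod_cast congrArg (Nat.cast : ℕ → ℚ) hb
      simp only [h2]
      norm_num
      rw [this]
      field_simp
      ring

lemma rval_form (S : List Bool) :
    ∃ B : ℕ, B < 2^S.length ∧ rval S = (2*B+1)/2^S.length := by
  induction S using List.reverseRecOn with
  | nil => exact ⟨0, by norm_num, by simp [rval]⟩
  | append_singleton S b ih =>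
    obtain ⟨B, hB, hr⟩ := ih
    rw [rval_append, hr]
    cases b
    · refine ⟨2*B, by simp; omega, ?_⟩
      simp only [Bool.false_eq_true, if_false]
      push_cast
      rw [List.length_append]
      field_simp
      simp only [List.length_cons, List.length_nil]
      ring
    · refine ⟨2*B+1, by simp; omega, ?_⟩
      simp only [show (true = true) = True by simp, if_true]
      push_cast
      rw [List.length_append]
      field_simp
      simp only [List.length_cons, List.length_nil]
      ring

/-- Theorem 2.2(b): the `r`-values of strings of length at most `m` are exactly
the fractions `ℓ/2^m` for `1 ≤ ℓ ≤ 2^(m+1) - 1`. -/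
theorem stmt1 (m : ℕ) :
    {x : ℚ | ∃ S : List Bool, S.length ≤ m ∧ rval S = x} =
      {x : ℚ | ∃ l : ℕ, 1 ≤ l ∧ l ≤ 2 ^ (m + 1) - 1 ∧ x = (l : ℚ) / 2 ^ m} := by
  ext x
  simp only [Set.mem_setOf_eq]
  constructor
  · rintro ⟨S, hlen, rfl⟩
    obtain ⟨B, hB, hr⟩ := rval_form S
    set n := S.length with hn
    refine ⟨(2*B+1) * 2^(m-n), Nat.one_le_iff_ne_zero.mpr (by positivity), ?_, ?_⟩
    · have h1 : (2*B+1) * 2^(m-n) ≤ (2^(n+1) - 1) * 2^(m-n) :=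
        Nat.mul_le_mul_right _ (by omega)
      have h2 : (2^(n+1) - 1) * 2^(m-n) = 2^(m+1) - 2^(m-n) := by
        have : 2^(n+1) * 2^(m-n) = 2^(m+1) := by
          rw [← pow_add]; congr 1; omega
        have h3 : 1 ≤ 2^(n+1) := Nat.one_le_two_pow
        rw [Nat.sub_mul, one_mul, this]
      have h4 : 1 ≤ 2^(m-n) := Nat.one_le_two_pow
      omega
    · rw [hr]
      have hmn : 2^n * 2^(m-n) = 2^m := by rw [← pow_add]; congr 1; omega
      have : ((2:ℚ)^n) * 2^(m-n) = 2^m := by exact_mod_cast congrArg (Nat.cast : ℕ → ℚ) hmn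
      push_cast
      rw [← this]
      have hp : ((2:ℚ)^n) ≠ 0 := by positivity
      have hp2 : ((2:ℚ)^(m-n)) ≠ 0 := by positivity
      field_simp
  · rintro ⟨l, hl1, hl2, rfl⟩
    obtain ⟨k, j, hj, hlj⟩ := Nat.exists_eq_two_pow_mul_odd (by omega : l ≠ 0)
    obtain ⟨B, rfl⟩ := hj
    have hk : k ≤ m := by
      by_contra h
      have : 2^(m+1) ≤ 2^k := Nat.pow_le_pow_right (by norm_num) (by omega)
      have : 2^k ≤ 2^k * (2*B+1) := Nat.le_mul_of_pos_right _ (by omega)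
      omega
    have hB : B < 2^(m-k) := by
      have hlt : 2^k * (2*B+1) < 2^(m+1) := by omega
      have : 2^(m+1) = 2^k * (2 * 2^(m-k)) := by
        rw [← pow_succ']
        rw [← pow_add]; congr 1; omega
      rw [this] at hlt
      have := Nat.lt_of_mul_lt_mul_left hlt
      omega
    obtain ⟨S, hlen, hr⟩ := exists_str (m-k) B hB
    refine ⟨S, by omega, ?_⟩
    rw [hr]
    have hmn : 2^(m-k) * 2^k = 2^m := by rw [← pow_add]; congr 1; omega
    have hc : ((2:ℚ)^(m-k)) * 2^k = 2^m := by exact_mod_cast congrArg (Nat.cast : ℕ → ℚ) hmn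
    rw [hlj]
    push_cast
    rw [← hc]
    have hp : ((2:ℚ)^(m-k)) ≠ 0 := by positivity
    have hp2 : ((2:ℚ)^k) ≠ 0 := by positivity
    field_simp
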